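/- arXiv:1304.6388 — 2 statements merged into one kernel-verified Lean document; each statement's English description precedes it below -/
import Mathlib

section
/- The relation ≺ on locally finite complete derivation trees of G is irreflexive and transitive, and it admits no infinite strictly decreasing sequence; that is, ≺ is a well-founded strict partial order on the locally finite complete derivation trees of G. -/
/-! ## Countable words over an alphabet -/

/-- A "preword" over `A`: a countable linear order realized as a set of rationals,
together with a labeling of its elements by letters of `A`. -/
structure PreWord (A : Type) : Type where
  carrier : Set ℚ
  label : carrier → A

namespace PreWord

/-- Two prewords are equivalent iff there is an order isomorphism between their
carriers preserving the labels. -/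
def Equiv {A : Type} (u v : PreWord A) : Prop :=
  ∃ f : u.carrier ≃o v.carrier, ∀ q, v.label (f q) = u.label q

theorem Equiv.refl {A : Type} (u : PreWord A) : Equiv u u :=
  ⟨OrderIso.refl _, fun _ => rfl⟩

theorem Equiv.symm {A : Type} {u v : PreWord A} : Equiv u v → Equiv v u := by
  rintro ⟨f, hf⟩
  exact ⟨f.symm, fun q => by rw [← hf (f.symm q), OrderIso.apply_symm_apply]⟩

theorem Equiv.trans {A : Type} {u v w : PreWord A} : Equiv u v → Equiv v w → Equiv u w := by
  rintro ⟨f, hf⟩ ⟨g, hg⟩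
  exact ⟨f.trans g, fun q => by rw [OrderIso.trans_apply, hg, hf]⟩

instance setoid (A : Type) : Setoid (PreWord A) where
  r := Equiv
  iseqv := ⟨Equiv.refl, Equiv.symm, Equiv.trans⟩

end PreWord

/-- A countable word over `A`: an isomorphism class of labeled countable linear orders. -/
def Word (A : Type) : Type := Quotient (PreWord.setoid A)

namespace Word

/-- The word determined by an arbitrary countable linear order `I` with labeling `lab`. -/
noncomputable def of {I A : Type} [LinearOrder I] [Countable I] (lab : I → A) : Word A :=
  let e : I ↪o ℚ := (Order.embedding_from_countable_to_dense I ℚ).some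
  Quotient.mk _ ⟨Set.range e, fun q => lab (Classical.choose q.2)⟩

/-- The empty word. -/
def eps (A : Type) : Word A :=
  Quotient.mk _ ⟨∅, fun q => absurd q.2 (Set.notMem_empty q.1)⟩

/-- The one-letter word. -/
def letter {A : Type} (a : A) : Word A :=
  Quotient.mk _ ⟨{(0 : ℚ)}, fun _ => a⟩

/-- Relabeling of a word along a function. -/
noncomputable def map {A B : Type} (g : A → B) (w : Word A) : Word B :=
  Quotient.mk _ ⟨(Quotient.out w).carrier, fun q => g ((Quotient.out w).label q)⟩

instance sigmaLexCountable {I : Type} (κ : I → Type) [Countable I] [∀ i, Countable (κ i)] :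
    Countable (Σₗ i, κ i) :=
  inferInstanceAs (Countable (Σ i, κ i))

/-- Generalized concatenation `∏_{i ∈ I} w i` of words over a countable linear order `I`:
the word on the lexicographically ordered disjoint sum of the underlying orders. -/
noncomputable def concat {I A : Type} [LinearOrder I] [Countable I] (w : I → Word A) : Word A :=
  Word.of (I := Σₗ i : I, (Quotient.out (w i)).carrier)
    (fun p => (Quotient.out (w (ofLex p).1)).label (ofLex p).2)

/-- Binary concatenation of words. -/
noncomputable def append {A : Type} (u v : Word A) : Word A :=
  concat (I := Fin 2) ![u, v]

/-- The finite word given by a list of letters. -/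
noncomputable def ofList {A : Type} (l : List A) : Word A :=
  Word.of (I := Fin l.length) l.get

/-- Concatenation of a finite list of words. -/
noncomputable def concatList {A : Type} (l : List (Word A)) : Word A :=
  concat (I := Fin l.length) l.get

/-- A word is scattered if its underlying linear order has no suborder isomorphic to `ℚ`,
equivalently there is no order embedding of `ℚ` into it. -/
def IsScattered {A : Type} (w : Word A) : Prop :=
  IsEmpty (ℚ ↪o (Quotient.out w).carrier)

/-- A word is well-ordered if its underlying linear order has no suborder isomorphic to the
negative integers, i.e. there is no order embedding of `ℕᵒᵈ` into it. -/
def IsWellOrdered {A : Type} (w : Word A) : Prop :=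
  IsEmpty (ℕᵒᵈ ↪o (Quotient.out w).carrier)

end Word

/-! ## Languages and their operations -/

namespace Lang

/-- Concatenation of languages. -/
noncomputable def conc {A : Type} (L₁ L₂ : Set (Word A)) : Set (Word A) :=
  {w | ∃ u ∈ L₁, ∃ v ∈ L₂, w = Word.append u v}

/-- ω-power of a language: `L^ω = {∏_{i∈ℕ} w i : ∀ i, w i ∈ L}`. -/
noncomputable def omegaPow {A : Type} (L : Set (Word A)) : Set (Word A) :=
  {w | ∃ f : ℕ → Word A, (∀ i, f i ∈ L) ∧ w = Word.concat f}

end Lang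
/-! ## Muller context-free grammars and derivation trees

Nonterminals `V` and terminals `T` are kept disjoint by using the sum type `V ⊕ T`.
The label `none` represents `ε`. Children of a node `x` are `x·1, …, x·n` (1-indexed). -/

/-- A Muller context-free grammar with nonterminal alphabet `V` and terminal alphabet `T`. -/
structure MCFG (V T : Type) where
  /-- the finite set of productions `A → α` -/
  prods : Finset (V × List (V ⊕ T))
  /-- the start symbol -/
  start : V
  /-- the set of (nonempty) accepting sets -/
  accept : Finset (Finset V)
  accept_nonempty : ∀ F ∈ accept, F.Nonempty

variable {V T : Type}

/-- A derivation tree of the grammar `G`: a labeled tree domain satisfying the local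
production condition at inner nodes and the Muller condition on infinite paths.
The value of `label` outside `dom` is irrelevant. -/
structure DerivTree (G : MCFG V T) where
  /-- the tree domain: a nonempty prefix-closed set of finite sequences -/
  dom : Set (List ℕ)
  root_mem : [] ∈ dom
  prefix_closed : ∀ ⦃x y : List ℕ⦄, y ∈ dom → x <+: y → x ∈ dom
  /-- the labeling; `none` codes `ε`, `some (Sum.inl A)` a nonterminal, `some (Sum.inr a)`
  a terminal -/
  label : List ℕ → Option (V ⊕ T)
  /-- every inner node is labeled by the left-hand side of a production whose right-hand
  side labels its children `x·1, …, x·n`; productions with empty right-hand side give one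
  single child labeled `ε` -/
  inner_node : ∀ x ∈ dom, (∃ i, x ++ [i] ∈ dom) →
    ∃ A : V, ∃ α : List (V ⊕ T), (A, α) ∈ G.prods ∧ label x = some (Sum.inl A) ∧
      (α = [] → (∀ i : ℕ, x ++ [i] ∈ dom ↔ i = 1) ∧ label (x ++ [1]) = none) ∧
      (α ≠ [] →
        (∀ i : ℕ, x ++ [i] ∈ dom ↔ 1 ≤ i ∧ i ≤ α.length) ∧
        (∀ j : ℕ, ∀ h : j < α.length, label (x ++ [j + 1]) = some (α.get ⟨j, h⟩)))
  /-- Muller acceptance: along every infinite path, the set of nonterminals occurring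
  infinitely often as labels is an accepting set -/
  muller : ∀ b : ℕ → ℕ, (∀ n : ℕ, (List.ofFn fun k : Fin n => b k) ∈ dom) →
    ∃ F ∈ G.accept, ∀ A : V,
      A ∈ F ↔ ∀ N : ℕ, ∃ n ≥ N, label (List.ofFn fun k : Fin n => b k) = some (Sum.inl A)

namespace DerivTree

variable {G : MCFG V T}

/-- `x` is a leaf of `t`. -/
def IsLeaf (t : DerivTree G) (x : List ℕ) : Prop :=
  x ∈ t.dom ∧ ∀ i : ℕ, x ++ [i] ∉ t.dom

/-- A derivation tree is complete if all its leaves are labeled in `Σ ∪ {ε}`. -/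
def IsComplete (t : DerivTree G) : Prop :=
  ∀ x : List ℕ, t.IsLeaf x → ∀ A : V, t.label x ≠ some (Sum.inl A)

/-- A derivation tree is locally finite if every node has a descendant which is a leaf. -/
def LocallyFinite (t : DerivTree G) : Prop :=
  ∀ x ∈ t.dom, ∃ y : List ℕ, x <+: y ∧ t.IsLeaf y

/-- The labeled frontier of a derivation tree: the word over `V ⊕ T` formed by the leaves
not labeled `ε`, in the lexicographic order, with the inherited labels. -/
noncomputable def lfr (t : DerivTree G) : Word (V ⊕ T) :=
  Word.of (I := {x : List ℕ // t.IsLeaf x ∧ t.label x ≠ none})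
    (fun x => Classical.choose (Option.ne_none_iff_exists'.mp x.2.2))

/-- The language generated by `G` from the nonterminal `A`: the set of words over the
terminal alphabet whose image under the inclusion `T → V ⊕ T` is the labeled frontier of
some complete `A`-tree. -/
noncomputable def _root_.MCFG.lang (G : MCFG V T) (A : V) : Set (Word T) :=
  {w | ∃ t : DerivTree G, t.IsComplete ∧ t.label [] = some (Sum.inl A) ∧
        Word.map Sum.inr w = t.lfr}

end DerivTree

/-- `L` is a Muller context-free language over the terminal alphabet `T`. -/
def IsMCFL {T : Type} (L : Set (Word T)) : Prop :=
  ∃ (V : Type) (_ : Fintype V) (G : MCFG V T), L = G.lang G.start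

/-- The properties of the normal form of Muller context-free grammars generating scattered
words used here: every derivation tree can be replaced by a locally finite one with the
same root symbol and the same labeled frontier, and the labeled frontier of every
derivation tree is scattered. -/
def MCFG.InNormalForm (G : MCFG V T) : Prop :=
  (∀ t : DerivTree G, ∃ t' : DerivTree G, t'.LocallyFinite ∧
      t'.label [] = t.label [] ∧ t'.lfr = t.lfr) ∧
  (∀ t : DerivTree G, t.lfr.IsScattered)
/-! ## The Hausdorff hierarchy and ranks -/

/-- `parts` is a decomposition of `s` as the ordered sum `∑_{i∈I} parts i`:
the parts cover `s` and appear in increasing order. -/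
def SumDecomp {I : Type} [LT I] (s : Set ℚ) (parts : I → Set ℚ) : Prop :=
  (⋃ i, parts i) = s ∧ ∀ i j : I, i < j → ∀ x ∈ parts i, ∀ y ∈ parts j, x < y

/-- The Hausdorff hierarchy (in the variant of Khoussainov–Rubin–Stephan) on suborders of
`ℚ`: `VD 0` is the class of finite orders, and for `α > 0`, `VD α` consists of the finite
sums of orders of the form `∑_{i∈ℤ} I_i` with each `I_i ∈ VD β_i` for some `β_i < α`. -/
noncomputable def VD : Ordinal.{0} → Set (Set ℚ) :=
  Ordinal.lt_wf.fix fun α ih =>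
    if α = 0 then {s | s.Finite}
    else
      {s | ∃ n : ℕ, ∃ big : Fin n → Set ℚ, SumDecomp s big ∧
        ∀ j : Fin n, ∃ parts : ℤ → Set ℚ, SumDecomp (big j) parts ∧
          ∀ i : ℤ, ∃ β : Ordinal, ∃ hβ : β < α, parts i ∈ ih β hβ}

/-- The Hausdorff rank of a suborder of `ℚ`: the least `α` with `s ∈ VD α`. -/
noncomputable def hrank (s : Set ℚ) : Ordinal :=
  sInf {α | s ∈ VD α}

/-- The Hausdorff rank of a countable linear order. -/
noncomputable def orderRank (I : Type) [LinearOrder I] [Countable I] : Ordinal :=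
  hrank (Set.range ((Order.embedding_from_countable_to_dense I ℚ).some : I ↪o ℚ))

/-- The Hausdorff rank of a (scattered) word. -/
noncomputable def Word.rank {A : Type} (w : Word A) : Ordinal :=
  hrank (Quotient.out w).carrier

namespace DerivTree

variable {V T : Type} {G : MCFG V T}

/-- `rank(t|_x)`: the Hausdorff rank of the labeled frontier of the subtree of `t`
rooted at `x`, i.e. of the lexicographically ordered set of non-`ε`-labeled leaves of `t`
that are descendants of `x`. -/
noncomputable def nodeRank (t : DerivTree G) (x : List ℕ) : Ordinal :=
  orderRank {y : List ℕ // x <+: y ∧ t.IsLeaf y ∧ t.label y ≠ none}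

/-- `rank(t) = rank(lfr(t))`. -/
noncomputable def rank (t : DerivTree G) : Ordinal :=
  Word.rank t.lfr

/-- The set of nodes of `t` of maximal rank. -/
noncomputable def maxNodes (t : DerivTree G) : Set (List ℕ) :=
  {x | x ∈ t.dom ∧ t.nodeRank x = t.rank}

end DerivTree

/-! ## Paths -/

/-- `P` is a path of the tree domain (or prefix of a tree domain) `D`: a nonempty,
prefix-closed subset of `D` in which every node has at most one child. -/
def IsPathIn (D P : Set (List ℕ)) : Prop :=
  P ⊆ D ∧ [] ∈ P ∧ (∀ ⦃x y : List ℕ⦄, y ∈ P → x <+: y → x ∈ P) ∧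
    ∀ (x : List ℕ) (i j : ℕ), x ++ [i] ∈ P → x ++ [j] ∈ P → i = j

/-- `P` is a maximal path of `D`. -/
def IsMaxPathIn (D P : Set (List ℕ)) : Prop :=
  IsPathIn D P ∧ ∀ Q : Set (List ℕ), IsPathIn D Q → P ⊆ Q → Q = P

namespace DerivTree

variable {V T : Type} {G : MCFG V T}

/-- The set of maximal paths covering the nodes of maximal rank. -/
noncomputable def maxPaths (t : DerivTree G) : Set (Set (List ℕ)) :=
  {P | IsMaxPathIn t.maxNodes P}

/-- `level(t)`: the number of maximal paths covering `maxNodes t`. -/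
noncomputable def level (t : DerivTree G) : ℕ :=
  (t.maxPaths).ncard

/-- `|branch(t)|`: the length of the longest common prefix of the maximal paths covering
`maxNodes t`. -/
noncomputable def branchLen (t : DerivTree G) : ℕ∞ :=
  ⨆ x ∈ ⋂₀ t.maxPaths, (x.length : ℕ∞)

/-- The labels occurring in `P` at or above (i.e. at descendants of) the node `x`. -/
def labelsFrom (t : DerivTree G) (P : Set (List ℕ)) (x : List ℕ) : Set (Option (V ⊕ T)) :=
  {l | ∃ y ∈ P, x <+: y ∧ t.label y = l}

/-- The labels occurring infinitely often on the (infinite) path `P`. -/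
def infLabels (t : DerivTree G) (P : Set (List ℕ)) : Set (Option (V ⊕ T)) :=
  {l | ∀ N : ℕ, ∃ y ∈ P, N ≤ y.length ∧ t.label y = l}

/-- `|head(P)|` for a path `P` of `t`: for infinite `P`, the length of the least node `x`
of `P` with `infLabels P = labelsFrom P x`; for finite `P`, the length of its last node. -/
noncomputable def headLen (t : DerivTree G) (P : Set (List ℕ)) : ℕ :=
  open Classical in
  if P.Infinite then
    sInf {n : ℕ | ∃ x ∈ P, x.length = n ∧ t.infLabels P = t.labelsFrom P x}
  else
    sSup {n : ℕ | ∃ x ∈ P, x.length = n}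

/-- `|head(π)|` where `π` is the unique maximal path whose nodes form `maxNodes t`
(meaningful when `level t = 1`, in which case `maxNodes t` is itself that path). -/
noncomputable def headLenMax (t : DerivTree G) : ℕ :=
  t.headLen t.maxNodes

/-- The well-founded strict order `≺` on locally finite complete derivation trees. -/
def prec (t' t : DerivTree G) : Prop :=
  t'.rank < t.rank ∨
  (t'.rank = t.rank ∧ t'.level < t.level) ∨
  (t'.rank = t.rank ∧ t'.level = t.level ∧ 1 < t.level ∧ t'.branchLen < t.branchLen) ∨
  (t'.rank = t.rank ∧ t'.level = t.level ∧ t.level = 1 ∧ t'.headLenMax < t.headLenMax)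

/-- `P` is the central path of `t`: the unique infinite path contained in `maxNodes t`. -/
def IsCentralPath (t : DerivTree G) (P : Set (List ℕ)) : Prop :=
  IsPathIn t.maxNodes P ∧ P.Infinite ∧
    ∀ Q : Set (List ℕ), IsPathIn t.maxNodes Q → Q.Infinite → Q = P

/-- `t` is simple: `maxNodes t` contains a single infinite path `π`, and
`infLabels(π) = labels(π)`, i.e. `head(π)` is the root. -/
def IsSimple (t : DerivTree G) : Prop :=
  ∃ P : Set (List ℕ), t.IsCentralPath P ∧ t.infLabels P = t.labelsFrom P []

/-- `t` is an `F`-simple `A`-tree: a simple tree with root symbol `A` whose central path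
has label set `F`. -/
def IsFSimple (t : DerivTree G) (F : Finset V) (A : V) : Prop :=
  t.label [] = some (Sum.inl A) ∧
  ∃ P : Set (List ℕ), t.IsCentralPath P ∧ t.infLabels P = t.labelsFrom P [] ∧
    t.labelsFrom P [] = {l | ∃ B ∈ F, l = some (Sum.inl B)}

end DerivTree

section PrecAux

variable {V T : Type} {G : MCFG V T}

/-- A measure into a well-founded lexicographic product witnessing termination of `≺`. -/
noncomputable def DerivTree.precMeasure (t : DerivTree G) : Ordinal ×ₗ (ℕ ×ₗ ℕ∞) :=
  toLex (t.rank, toLex (t.level, if t.level = 1 then (t.headLenMax : ℕ∞) else t.branchLen))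

theorem DerivTree.precMeasure_lt_of_prec {t' t : DerivTree G} (h : DerivTree.prec t' t) :
    DerivTree.precMeasure t' < DerivTree.precMeasure t := by
  unfold DerivTree.precMeasure
  rw [Prod.Lex.lt_iff]
  rcases h with h | ⟨e, h⟩ | ⟨e, l, hl, h⟩ | ⟨e, l, hl, h⟩
  · exact Or.inl h
  · exact Or.inr ⟨e, Prod.Lex.lt_iff.mpr (Or.inl h)⟩
  · refine Or.inr ⟨e, Prod.Lex.lt_iff.mpr (Or.inr ⟨l, ?_⟩)⟩
    have h1 : t.level ≠ 1 := by omega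
    have h2 : t'.level ≠ 1 := by omega
    simpa [h1, h2] using h
  · refine Or.inr ⟨e, Prod.Lex.lt_iff.mpr (Or.inr ⟨l, ?_⟩)⟩
    have h2 : t'.level = 1 := l.trans hl
    simpa [hl, h2] using (Nat.cast_lt (α := ℕ∞)).mpr h

theorem DerivTree.prec_irrefl (t : DerivTree G) : ¬ DerivTree.prec t t := by
  rintro (h | ⟨-, h⟩ | ⟨-, -, -, h⟩ | ⟨-, -, -, h⟩) <;> exact lt_irrefl _ h

theorem DerivTree.prec_trans {t₁ t₂ t₃ : DerivTree G}
    (h12 : DerivTree.prec t₁ t₂) (h23 : DerivTree.prec t₂ t₃) : DerivTree.prec t₁ t₃ := by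
  rcases h12 with h | ⟨e12, h⟩ | ⟨e12, l12, hl2, h⟩ | ⟨e12, l12, hl2, h⟩ <;>
    rcases h23 with h' | ⟨e23, h'⟩ | ⟨e23, l23, hl3, h'⟩ | ⟨e23, l23, hl3, h'⟩
  · exact Or.inl (h.trans h')
  · exact Or.inl (h.trans_eq e23)
  · exact Or.inl (h.trans_eq e23)
  · exact Or.inl (h.trans_eq e23)
  · exact Or.inl (e12.trans_lt h')
  · exact Or.inr (Or.inl ⟨e12.trans e23, h.trans h'⟩)
  · exact Or.inr (Or.inl ⟨e12.trans e23, h.trans_eq l23⟩)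
  · exact Or.inr (Or.inl ⟨e12.trans e23, h.trans_eq l23⟩)
  · exact Or.inl (e12.trans_lt h')
  · exact Or.inr (Or.inl ⟨e12.trans e23, l12.trans_lt h'⟩)
  · exact Or.inr (Or.inr (Or.inl ⟨e12.trans e23, l12.trans l23, hl3, h.trans h'⟩))
  · omega
  · exact Or.inl (e12.trans_lt h')
  · exact Or.inr (Or.inl ⟨e12.trans e23, l12.trans_lt h'⟩)
  · omega
  · exact Or.inr (Or.inr (Or.inr ⟨e12.trans e23, l12.trans l23, hl3, h.trans h'⟩))

end PrecAux

/-- The relation `≺` is an irreflexive, transitive relation on the locally finite complete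
derivation trees of `G`, admitting no infinite strictly decreasing sequence; that is, it is
a well-founded strict partial order on these trees. -/
theorem prec_isWellFoundedStrictOrder (V T : Type) [Fintype V] [Nonempty V]
    [Fintype T] [Nonempty T] (G : MCFG V T) (hG : G.InNormalForm) :
    (∀ t : DerivTree G, t.LocallyFinite → t.IsComplete → ¬ DerivTree.prec t t) ∧
    (∀ t₁ t₂ t₃ : DerivTree G,
      t₁.LocallyFinite → t₁.IsComplete → t₂.LocallyFinite → t₂.IsComplete →
      t₃.LocallyFinite → t₃.IsComplete →
      DerivTree.prec t₁ t₂ → DerivTree.prec t₂ t₃ → DerivTree.prec t₁ t₃) ∧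
    (¬ ∃ f : ℕ → DerivTree G, (∀ n, (f n).LocallyFinite ∧ (f n).IsComplete) ∧
        ∀ n, DerivTree.prec (f (n + 1)) (f n)) := by
  refine ⟨fun t _ _ => DerivTree.prec_irrefl t,
    fun t₁ t₂ t₃ _ _ _ _ _ _ h12 h23 => DerivTree.prec_trans h12 h23, ?_⟩
  rintro ⟨f, -, hd⟩
  have hlt : ∀ n, DerivTree.precMeasure (f (n + 1)) < DerivTree.precMeasure (f n) :=
    fun n => DerivTree.precMeasure_lt_of_prec (hd n)
  have wf : WellFounded ((· < ·) : (Ordinal ×ₗ (ℕ ×ₗ ℕ∞)) → _ → Prop) := IsWellFounded.wf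
  obtain ⟨m, ⟨n, hn⟩, hmin⟩ :=
    wf.has_min (Set.range fun n => DerivTree.precMeasure (f n)) ⟨_, 0, rfl⟩
  exact hmin _ ⟨n + 1, rfl⟩ (hn ▸ hlt n)
end

section
/- Every F-simple A-tree t of G has a prefix of the form t_w for some w ∈ R_{A,F}: there exist w ∈ R_{A,F} and, for each leaf x of t_w, a derivation tree t_x of G with root symbol t_w(x), such that t is the tree obtained from t_w by substituting t_x for each leaf x of t_w. -/
/-! ## Pairs of words and their operations -/

namespace PairLang

/-- Product of pairs of words: `(u,v)·(u',v') = (uu', v'v)`. -/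
noncomputable def pairMul {A : Type} (p q : Word A × Word A) : Word A × Word A :=
  (Word.append p.1 q.1, Word.append q.2 p.2)

/-- Concatenation of sets of pairs of words. -/
noncomputable def conc {A : Type} (L L' : Set (Word A × Word A)) : Set (Word A × Word A) :=
  {r | ∃ p ∈ L, ∃ q ∈ L', r = pairMul p q}

/-- Kleene star of a set of pairs of words: `L^* = {(ε,ε)} ∪ L ∪ L·L ∪ ⋯`. -/
noncomputable def star {A : Type} (L : Set (Word A × Word A)) : Set (Word A × Word A) :=
  {r | ∃ l : List (Word A × Word A), (∀ p ∈ l, p ∈ L) ∧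
        r = l.foldr pairMul (Word.eps A, Word.eps A)}

instance sumLexCountable : Countable (ℕ ⊕ₗ ℕᵒᵈ) :=
  inferInstanceAs (Countable (ℕ ⊕ ℕᵒᵈ))

/-- The word `∏_{i∈ℕ}(u_i, v_i) = (u₀u₁⋯)(⋯v₁v₀)`: the concatenation of the first
components in increasing order of `i` followed by the second components in decreasing
order of `i`. -/
noncomputable def omegaWord {A : Type} (f : ℕ → Word A × Word A) : Word A :=
  Word.concat (I := ℕ ⊕ₗ ℕᵒᵈ)
    (fun i => Sum.elim (fun n : ℕ => (f n).1)
      (fun n : ℕᵒᵈ => (f (OrderDual.ofDual n)).2) (ofLex i))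

/-- ω-power of a set of pairs of words, a language of words. -/
noncomputable def omegaPow {A : Type} (L : Set (Word A × Word A)) : Set (Word A) :=
  {w | ∃ f : ℕ → Word A × Word A, (∀ i, f i ∈ L) ∧ w = omegaWord f}

/-- `L₁ × L₂ = {(u,v) : u ∈ L₁, v ∈ L₂}`. -/
def prod {A : Type} (L₁ L₂ : Set (Word A)) : Set (Word A × Word A) :=
  {p | p.1 ∈ L₁ ∧ p.2 ∈ L₂}

end PairLang
variable {V T : Type}

/-! ## The ω-regular languages `R_{A,F}` and the trees `t_w` -/

/-- The sequence `A = A₀, A₁, A₂, …` of nonterminals along a `Γ`-word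
`w = (α₁,A₁,β₁)(α₂,A₂,β₂)⋯` (coded as `w n = (α_{n+1}, A_{n+1}, β_{n+1})`). -/
def nthNT {V T : Type} (A : V) (w : ℕ → List (V ⊕ T) × V × List (V ⊕ T)) : ℕ → V
  | 0 => A
  | n + 1 => (w n).2.1

namespace MCFG

variable {V T : Type} (G : MCFG V T)

/-- `w ∈ R_{A,F}`: setting `A₀ = A`, we have `A₀ ∈ F`, every `A_i ∈ F`, every
`A_{i-1} → α_i A_i β_i` is a production, and the set of nonterminals occurring infinitely
often in `A₀, A₁, …` is exactly `F`. -/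
def InRAF (A : V) (F : Finset V) (w : ℕ → List (V ⊕ T) × V × List (V ⊕ T)) : Prop :=
  A ∈ F ∧ (∀ n : ℕ, (w n).2.1 ∈ F) ∧
  (∀ n : ℕ, (nthNT A w n, (w n).1 ++ [Sum.inl (w n).2.1] ++ (w n).2.2) ∈ G.prods) ∧
  (∀ B : V, B ∈ F ↔ ∀ N : ℕ, ∃ n ≥ N, nthNT A w n = B)

end MCFG

/-- The nodes `x₀ = ε`, `x_i = x_{i-1}·(|α_i|+1)` of the central path of the tree `t_w`. -/
def centralNode {V T : Type} (w : ℕ → List (V ⊕ T) × V × List (V ⊕ T)) : ℕ → List ℕ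
  | 0 => []
  | n + 1 => centralNode w n ++ [(w n).1.length + 1]

/-- The tree domain of the tree `t_w`: the central path together with the children of its
nodes; `x_{i-1}` has `|α_i A_i β_i|` children, and nodes off the central path are leaves. -/
def twDom {V T : Type} (w : ℕ → List (V ⊕ T) × V × List (V ⊕ T)) : Set (List ℕ) :=
  {x | x = [] ∨ ∃ n j : ℕ, 1 ≤ j ∧ j ≤ (w n).1.length + 1 + (w n).2.2.length ∧
        x = centralNode w n ++ [j]}

/-- The labels of `t_w` agree with `t.label`: the central node `x_n` is labeled `A_n`, and
the children of `x_n` are labeled left to right by the letters of `α_{n+1} A_{n+1} β_{n+1}`. -/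
def TwLabels {V T : Type} {G : MCFG V T} (A : V)
    (w : ℕ → List (V ⊕ T) × V × List (V ⊕ T)) (t : DerivTree G) : Prop :=
  (∀ n : ℕ, t.label (centralNode w n) = some (Sum.inl (nthNT A w n))) ∧
  (∀ n j : ℕ, ∀ h : j < ((w n).1 ++ [Sum.inl (w n).2.1] ++ (w n).2.2).length,
    t.label (centralNode w n ++ [j + 1]) =
      some (((w n).1 ++ [Sum.inl (w n).2.1] ++ (w n).2.2).get ⟨j, h⟩))

/-! ## Auxiliary lemmas -/

lemma path_chain {D P : Set (List ℕ)} (h : IsPathIn D P) (hInf : P.Infinite) :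
    ∃ c : ℕ → List ℕ, (∀ n, c n ∈ P) ∧ (∀ n, (c n).length = n) ∧
      (∀ y ∈ P, y = c y.length) ∧ ∀ n, ∃ j, c (n + 1) = c n ++ [j] := by
  obtain ⟨-, hnil, hpre, huch⟩ := h
  have huniq : ∀ n, ∀ y ∈ P, ∀ z ∈ P, y.length = n → z.length = n → y = z := by
    intro n
    induction n with
    | zero =>
      intro y hy z hz h1 h2
      rw [List.length_eq_zero_iff.mp h1, List.length_eq_zero_iff.mp h2]
    | succ k ih =>
      intro y hy z hz h1 h2
      have hy0 : y ≠ [] := by intro e; simp [e] at h1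
      have hz0 : z ≠ [] := by intro e; simp [e] at h2
      have ey : y.dropLast ++ [y.getLast hy0] = y := List.dropLast_append_getLast hy0
      have ez : z.dropLast ++ [z.getLast hz0] = z := List.dropLast_append_getLast hz0
      have hyd : y.dropLast ∈ P := hpre hy (List.dropLast_prefix y)
      have hzd : z.dropLast ∈ P := hpre hz (List.dropLast_prefix z)
      have hde : y.dropLast = z.dropLast := by
        apply ih _ hyd _ hzd <;> simp [List.length_dropLast, h1, h2]
      have := huch y.dropLast (y.getLast hy0) (z.getLast hz0) (by rw [ey]; exact hy)
        (by rw [hde, ez]; exact hz)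
      rw [← ey, ← ez, hde, this]
  have hex : ∀ n, ∃ y, y ∈ P ∧ y.length = n := by
    by_contra h'
    push_neg at h'
    obtain ⟨n, hn⟩ := h'
    have hlt : ∀ y ∈ P, y.length < n := by
      intro y hy
      by_contra hge
      push_neg at hge
      exact hn _ (hpre hy (List.take_prefix n y)) (by simp [List.length_take]; omega)
    refine hInf ?_
    have himg : ((fun y : List ℕ => y.length) '' P).Finite :=
      (Set.finite_Iio n).subset (by rintro - ⟨y, hy, rfl⟩; exact hlt y hy)
    exact Set.Finite.of_finite_image himg
      (fun y hy z hz he => huniq _ y hy z hz he rfl)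
  choose c hcP hclen using hex
  refine ⟨c, hcP, hclen, ?_, ?_⟩
  · intro y hy
    exact huniq _ y hy _ (hcP _) rfl (hclen _)
  · intro n
    have h1 : c (n+1) ≠ [] := by
      intro e; have := hclen (n+1); simp [e] at this
    have hd : (c (n+1)).dropLast = c n := by
      have hdP : (c (n+1)).dropLast ∈ P := hpre (hcP _) (List.dropLast_prefix _)
      exact huniq n _ hdP _ (hcP n) (by simp [List.length_dropLast, hclen]) (hclen n)
    exact ⟨(c (n+1)).getLast h1, by rw [← hd]; exact (List.dropLast_append_getLast h1).symm⟩

lemma subtree_exists {V T : Type} {G : MCFG V T} (t : DerivTree G) (x : List ℕ)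
    (hx : x ∈ t.dom) :
    ∃ tx : DerivTree G, tx.dom = {y : List ℕ | x ++ y ∈ t.dom} ∧
      ∀ y, tx.label y = t.label (x ++ y) := by
  have key : ∀ (b' : ℕ → ℕ),
      (∀ n : ℕ, (List.ofFn fun k : Fin n => b' k) ∈ {y : List ℕ | x ++ y ∈ t.dom}) →
      ∃ F ∈ G.accept, ∀ A : V, A ∈ F ↔ ∀ N : ℕ, ∃ n ≥ N,
        t.label (x ++ List.ofFn fun k : Fin n => b' k) = some (Sum.inl A) := by
    intro b' hb'
    set b'' : ℕ → ℕ := fun k => if h : k < x.length then x.get ⟨k, h⟩ else b' (k - x.length)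
      with hb''def
    have h1 : ∀ n ≤ x.length, (List.ofFn fun k : Fin n => b'' k) = x.take n := by
      intro n hn
      apply List.ext_getElem
      · simp; omega
      · intro i hi1 hi2
        simp only [List.getElem_ofFn, List.getElem_take]
        have : i < x.length := by simp at hi2; omega
        simp [hb''def, this, List.get_eq_getElem]
    have h2 : ∀ m, (List.ofFn fun k : Fin (x.length + m) => b'' k)
        = x ++ List.ofFn fun k : Fin m => b' k := by
      intro m
      apply List.ext_getElem
      · simp
      · intro i hi1 hi2
        simp only [List.getElem_ofFn]
        rcases lt_or_ge i x.length with h | h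
        · rw [List.getElem_append_left h]
          simp [hb''def, h, List.get_eq_getElem]
        · rw [List.getElem_append_right h]
          simp [hb''def, Nat.not_lt.mpr h]
    have hmem : ∀ n : ℕ, (List.ofFn fun k : Fin n => b'' k) ∈ t.dom := by
      intro n
      rcases le_or_gt n x.length with hn | hn
      · rw [h1 n hn]
        exact t.prefix_closed hx (List.take_prefix n x)
      · obtain ⟨m, rfl⟩ : ∃ m, n = x.length + m := ⟨n - x.length, by omega⟩
        rw [h2 m]
        exact hb' m
    obtain ⟨F, hF, hiff⟩ := t.muller b'' hmem
    refine ⟨F, hF, fun A => ⟨fun hA N => ?_, fun hA => ?_⟩⟩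
    · obtain ⟨n, hn, hl⟩ := (hiff A).mp hA (N + x.length)
      obtain ⟨m, rfl⟩ : ∃ m, n = x.length + m := ⟨n - x.length, by omega⟩
      exact ⟨m, by omega, by rw [← h2 m]; exact hl⟩
    · refine (hiff A).mpr fun N => ?_
      obtain ⟨m, hm, hl⟩ := hA N
      exact ⟨x.length + m, by omega, by rw [h2 m]; exact hl⟩
  refine ⟨⟨{y : List ℕ | x ++ y ∈ t.dom}, by simpa using hx, ?_,
      fun y => t.label (x ++ y), ?_, ?_⟩, rfl, fun y => rfl⟩
  · intro y' y hy hp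
    exact t.prefix_closed hy ((List.prefix_append_right_inj x).mpr hp)
  · rintro y hy ⟨i, hi⟩
    have hi' : (x ++ y) ++ [i] ∈ t.dom := by rwa [List.append_assoc]
    obtain ⟨A, α, hprod, hlab, hnil, hcons⟩ := t.inner_node (x ++ y) hy ⟨i, hi'⟩
    refine ⟨A, α, hprod, hlab, ?_, ?_⟩
    · intro he
      obtain ⟨hch, hl⟩ := hnil he
      refine ⟨fun i => ?_, ?_⟩
      swap
      · show t.label (x ++ (y ++ [1])) = none
        rw [← List.append_assoc]; exact hl
      rw [Set.mem_setOf_eq, ← List.append_assoc]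
      exact hch i
    · intro he
      obtain ⟨hch, hl⟩ := hcons he
      refine ⟨fun i => ?_, fun j hj => ?_⟩
      · rw [Set.mem_setOf_eq, ← List.append_assoc]
        exact hch i
      · show t.label (x ++ (y ++ [j+1])) = some (α.get ⟨j, hj⟩)
        rw [← List.append_assoc]
        exact hl j hj
  · intro b' hb'
    simpa using key b' hb'
/-- Every `F`-simple `A`-tree `t` of `G` has a prefix of the form `t_w` for some
`w ∈ R_{A,F}`: `t` is obtained from `t_w` by substituting, for each leaf `x` of `t_w`,
a derivation tree `t_x` of `G` with root symbol `t_w(x)`. -/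
theorem fSimple_tree_has_tw_prefix (V T : Type) [Fintype V] [Nonempty V]
    [Fintype T] [Nonempty T] (G : MCFG V T) (hG : G.InNormalForm)
    (A : V) (F : Finset V) (hF : F ∈ G.accept)
    (t : DerivTree G) (ht : t.IsFSimple F A) :
    ∃ w : ℕ → List (V ⊕ T) × V × List (V ⊕ T), G.InRAF A F w ∧
      twDom w ⊆ t.dom ∧ TwLabels A w t ∧
      (∀ y ∈ t.dom, y ∈ twDom w ∨
        ∃ x ∈ twDom w, (∀ i : ℕ, x ++ [i] ∉ twDom w) ∧ x <+: y) ∧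
      (∀ x ∈ twDom w, (∀ i : ℕ, x ++ [i] ∉ twDom w) →
        ∃ tx : DerivTree G, tx.dom = {y : List ℕ | x ++ y ∈ t.dom} ∧
          ∀ y ∈ tx.dom, tx.label y = t.label (x ++ y)) := by
  obtain ⟨hrootA, P, ⟨hPpath, hPinf, -⟩, hinfl, hFset⟩ := ht
  have hPdom : ∀ y ∈ P, y ∈ t.dom := fun y hy => (hPpath.1 hy).1
  obtain ⟨c, hcP, hclen, hcuniq, hcstep⟩ := path_chain hPpath hPinf
  have hc0 : c 0 = [] := List.length_eq_zero_iff.mp (hclen 0)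
  choose b hb using hcstep
  have hcdom : ∀ n, c n ∈ t.dom := fun n => hPdom _ (hcP n)
  have hchild : ∀ m, ∃ i, c m ++ [i] ∈ t.dom :=
    fun m => ⟨b m, by rw [← hb m]; exact hcdom (m+1)⟩
  have hinner : ∀ n, ∃ Aα : V × List (V ⊕ T),
      (Aα.1, Aα.2) ∈ G.prods ∧ t.label (c n) = some (Sum.inl Aα.1) ∧ Aα.2 ≠ [] ∧
      (∀ i, c n ++ [i] ∈ t.dom ↔ 1 ≤ i ∧ i ≤ Aα.2.length) ∧
      (∀ j (h : j < Aα.2.length), t.label (c n ++ [j+1]) = some (Aα.2.get ⟨j, h⟩)) := by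
    intro n
    obtain ⟨A', α, hprod, hlab, hnilc, hconsc⟩ := t.inner_node (c n) (hcdom n) (hchild n)
    have hne : α ≠ [] := by
      intro he
      obtain ⟨hchi, hl⟩ := hnilc he
      have hb1 : b n = 1 := (hchi (b n)).mp (by rw [← hb n]; exact hcdom (n+1))
      obtain ⟨A'', α', -, hlab', -, -⟩ := t.inner_node (c (n+1)) (hcdom (n+1)) (hchild (n+1))
      rw [hb n, hb1, hl] at hlab'
      exact Option.some_ne_none _ hlab'.symm
    obtain ⟨hchi, hlgi⟩ := hconsc hne
    exact ⟨(A', α), hprod, hlab, hne, hchi, hlgi⟩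
  choose Aα hprod hlabc hαne hch hlg using hinner
  set An : ℕ → V := fun n => (Aα n).1 with hAn
  set αn : ℕ → List (V ⊕ T) := fun n => (Aα n).2 with hαn
  have hbb : ∀ n, 1 ≤ b n ∧ b n ≤ (αn n).length :=
    fun n => (hch n (b n)).mp (by rw [← hb n]; exact hcdom (n+1))
  have hgetb : ∀ n, ∀ h : b n - 1 < (αn n).length,
      (αn n).get ⟨b n - 1, h⟩ = Sum.inl (An (n+1)) := by
    intro n h
    have h1 : (b n - 1) + 1 = b n := by have := (hbb n).1; omega
    have h2 := hlg n (b n - 1) h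
    rw [h1, ← hb n, hlabc (n+1)] at h2
    exact (Option.some.inj h2).symm
  set w : ℕ → List (V ⊕ T) × V × List (V ⊕ T) :=
    fun n => ((αn n).take (b n - 1), An (n+1), (αn n).drop (b n)) with hw
  have hαrec : ∀ n, (w n).1 ++ [Sum.inl (w n).2.1] ++ (w n).2.2 = αn n := by
    intro n
    have h1 : b n - 1 < (αn n).length := by have := hbb n; omega
    have h2 : (b n - 1) + 1 = b n := by have := (hbb n).1; omega
    show (αn n).take (b n - 1) ++ [Sum.inl (An (n+1))] ++ (αn n).drop (b n) = αn n
    rw [← hgetb n h1]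
    have h3 : (αn n).take (b n - 1) ++ [(αn n).get ⟨b n - 1, h1⟩] = (αn n).take (b n) := by
      have h4 := List.take_concat_get h1
      rw [List.concat_eq_append] at h4
      rw [List.get_eq_getElem, h4, h2]
    rw [h3, List.take_append_drop]
  have hlen : ∀ n, (w n).1.length + 1 + (w n).2.2.length = (αn n).length := by
    intro n
    simp only [hw, List.length_take, List.length_drop]
    have := hbb n
    omega
  have hcb : ∀ n, centralNode w n = c n := by
    intro n
    induction n with
    | zero => simp [centralNode, hc0]
    | succ k ih =>
      show centralNode w k ++ [(w k).1.length + 1] = c (k+1)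
      rw [ih, hb k]
      congr 2
      show ((αn k).take (b k - 1)).length + 1 = b k
      rw [List.length_take]
      have := hbb k; omega
  have hnt : ∀ n, nthNT A w n = An n := by
    intro n
    cases n with
    | zero =>
      show A = An 0
      have h1 := hlabc 0
      rw [hc0, hrootA] at h1
      exact Sum.inl.inj (Option.some.inj h1)
    | succ k => rfl
  have hBF : ∀ n, An n ∈ F := by
    intro n
    have hmem : some (Sum.inl (An n)) ∈ t.labelsFrom P [] :=
      ⟨c n, hcP n, List.nil_prefix, hlabc n⟩
    rw [hFset] at hmem
    obtain ⟨B, hBFmem, hBe⟩ := hmem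
    rwa [Sum.inl.inj (Option.some.inj hBe)]
  have hsub : twDom w ⊆ t.dom := by
    rintro x (rfl | ⟨n, j, hj1, hj2, rfl⟩)
    · exact t.root_mem
    · rw [hcb n]
      refine (hch n j).mpr ⟨hj1, ?_⟩
      have h5 := hlen n
      have h6 : (αn n).length = (Aα n).2.length := rfl
      omega
  have hwmem : ∀ m, c m ∈ twDom w := by
    intro m
    cases m with
    | zero => exact Or.inl hc0
    | succ k =>
      refine Or.inr ⟨k, b k, (hbb k).1, ?_, by rw [hcb k, ← hb k]⟩
      have := hlen k; have := hbb k; omega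
  refine ⟨w, ⟨?_, ?_, ?_, ?_⟩, hsub, ⟨?_, ?_⟩, ?_, ?_⟩
  · -- A ∈ F
    have h := hBF 0
    rw [← hnt 0] at h
    exact h
  · -- ∀ n, (w n).2.1 ∈ F
    exact fun n => hBF (n+1)
  · -- productions
    intro n
    rw [hnt n, hαrec n]
    exact hprod n
  · -- infinitely often
    intro B
    constructor
    · intro hBmem N
      have hmem : some (Sum.inl B) ∈ t.infLabels P := by
        rw [hinfl, hFset]; exact ⟨B, hBmem, rfl⟩
      obtain ⟨y, hyP, hylen, hylab⟩ := hmem N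
      refine ⟨y.length, hylen, ?_⟩
      have hyc : y = c y.length := hcuniq y hyP
      rw [hyc] at hylab
      rw [hlabc y.length] at hylab
      rw [hnt y.length]
      exact (Sum.inl.inj (Option.some.inj hylab.symm)).symm
    · intro hB
      obtain ⟨n, -, hn⟩ := hB 0
      rw [hnt n] at hn
      rw [← hn]
      exact hBF n
  · -- TwLabels 1
    intro n
    rw [hcb n, hnt n]
    exact hlabc n
  · -- TwLabels 2
    intro n j h
    have h' : j < (αn n).length := hαrec n ▸ h
    rw [hcb n, hlg n j h']
    exact congrArg some (List.get_of_eq (hαrec n) ⟨j, h⟩).symm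
  · -- partition
    intro y hy
    by_cases hyw : y ∈ twDom w
    · exact Or.inl hyw
    right
    set S : Set ℕ := {m | c m <+: y} with hSdef
    have hS0 : 0 ∈ S := by
      show c 0 <+: y
      rw [hc0]
      exact List.nil_prefix
    have hSb : BddAbove S := ⟨y.length, fun m hm => (hclen m) ▸ hm.length_le⟩
    set n := sSup S with hndef
    have hn : c n <+: y := Nat.sSup_mem ⟨0, hS0⟩ hSb
    have hmax : ∀ m, c m <+: y → m ≤ n := fun m hm => le_csSup hSb hm
    have hne : c n ≠ y := fun he => hyw (he ▸ hwmem n)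
    obtain ⟨d, hd⟩ := hn
    have hdne : d ≠ [] := by rintro rfl; exact hne (by simpa using hd)
    obtain ⟨j, d', rfl⟩ := List.exists_cons_of_ne_nil hdne
    have hxy : c n ++ [j] <+: y := ⟨d', by rw [← hd]; simp⟩
    have hxdom : c n ++ [j] ∈ t.dom := t.prefix_closed hy hxy
    have hjb : 1 ≤ j ∧ j ≤ (αn n).length := (hch n j).mp hxdom
    have hxw : c n ++ [j] ∈ twDom w :=
      Or.inr ⟨n, j, hjb.1, by have := hlen n; omega, by rw [hcb n]⟩
    have hjne : j ≠ b n := by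
      rintro rfl
      have h1 : c (n+1) <+: y := by rw [hb n]; exact hxy
      have := hmax (n+1) h1
      omega
    refine ⟨c n ++ [j], hxw, ?_, hxy⟩
    rintro i (h0 | ⟨m, k, -, -, he⟩)
    · simp at h0
    · rw [hcb m] at he
      obtain ⟨hxc, -⟩ := List.append_inj' he rfl
      have hm : m = n + 1 := by
        have h2 := congrArg List.length hxc
        simp [hclen] at h2
        omega
      rw [hm, hb n] at hxc
      exact hjne (by simpa using List.append_cancel_left hxc)
  · -- subtrees
    intro x hx _
    obtain ⟨tx, h1, h2⟩ := subtree_exists t x (hsub hx)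
    exact ⟨tx, h1, fun y _ => h2 y⟩
end
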